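/- Let (Ω, 𝓕, P) be a probability space and Y : Ω → ℝ a bounded measurable random variable with π := P(Y = esssup Y) > 0. For s > 0 let Q^s denote the exponentially tilted probability measure with density dQ^s/dP = e^{sY} / E_P[e^{sY}]. Then D_KL(Q^s ‖ P) tends to log(1/π) as s → +∞. -/

import Mathlib

open MeasureTheory Real Filter Set Classical

/-- Kullback–Leibler divergence: `E_P[(dQ/dP) log (dQ/dP)]` if `Q ≪ P`, and `+∞` otherwise. -/
noncomputable def KLdiv {Ω : Type*} [MeasurableSpace Ω] (Q P : Measure Ω) : EReal :=
  if Q ≪ P then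
    ((∫ ω, (Q.rnDeriv P ω).toReal * Real.log (Q.rnDeriv P ω).toReal ∂P : ℝ) : EReal)
  else ⊤

/-- As `s → +∞`, the KL divergence of the exponentially tilted measure
`dQ^s/dP = e^{sY}/E_P[e^{sY}]` from `P` tends to `log (1/π)`, where
`π = P(Y = esssup Y) > 0`. -/
theorem klDiv_tilted_tendsto_log_inv_pi
    {Ω : Type*} [MeasurableSpace Ω] (P : Measure Ω) [IsProbabilityMeasure P]
    (Y : Ω → ℝ) (hY : Measurable Y) (hbd : ∃ C : ℝ, ∀ ω, |Y ω| ≤ C)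
    (hπ : 0 < P {ω | Y ω = essSup Y P}) :
    Tendsto (fun s : ℝ => KLdiv (P.tilted fun ω => s * Y ω) P) atTop
      (nhds ((Real.log (1 / (P {ω | Y ω = essSup Y P}).toReal) : ℝ) : EReal)) := by
  obtain ⟨C, hC⟩ := hbd
  set M : ℝ := essSup Y P with hMdef
  set pR : ℝ := (P {ω | Y ω = M}).toReal with hpRdef
  have hpRpos : 0 < pR :=
    ENNReal.toReal_pos hπ.ne' (measure_ne_top P _)
  have hYae : ∀ᵐ ω ∂P, Y ω ≤ M :=
    ae_le_essSup (isBoundedUnder_of ⟨C, fun ω => (abs_le.mp (hC ω)).2⟩)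
  -- integrability helper
  have key : ∀ (K : ℝ) (h : Ω → ℝ), Measurable h → (∀ ω, |h ω| ≤ K) → Integrable h P := by
    intro K h hm hb
    exact Integrable.mono' (integrable_const K) hm.aestronglyMeasurable
      (Filter.Eventually.of_forall fun ω => hb ω)
  set g : ℝ → Ω → ℝ := fun s ω => Real.exp (s * (Y ω - M)) with hgdef
  have hgm : ∀ s, Measurable (g s) := fun s => ((hY.sub measurable_const).const_mul s).exp
  have habs : ∀ s ω, |s * (Y ω - M)| ≤ |s| * (C + |M|) := by
    intro s ω
    rw [abs_mul]
    refine mul_le_mul_of_nonneg_left ?_ (abs_nonneg s)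
    calc |Y ω - M| ≤ |Y ω| + |M| := abs_sub _ _
    _ ≤ C + |M| := by linarith [hC ω]
  have hg_int : ∀ s, Integrable (g s) P := by
    intro s
    refine key (Real.exp (|s| * (C + |M|))) _ (hgm s) fun ω => ?_
    rw [abs_of_pos (Real.exp_pos _)]
    exact Real.exp_le_exp.2 ((le_abs_self _).trans (habs s ω))
  set xg : ℝ → Ω → ℝ := fun s ω => (s * (Y ω - M)) * Real.exp (s * (Y ω - M)) with hxgdef
  have hxgm : ∀ s, Measurable (xg s) := fun s =>
    ((hY.sub measurable_const).const_mul s).mul (hgm s)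
  have hxg_int : ∀ s, Integrable (xg s) P := by
    intro s
    refine key ((|s| * (C + |M|)) * Real.exp (|s| * (C + |M|))) _ (hxgm s) fun ω => ?_
    rw [abs_mul, abs_of_pos (Real.exp_pos _)]
    have h1 := habs s ω
    have h2 : Real.exp (s * (Y ω - M)) ≤ Real.exp (|s| * (C + |M|)) :=
      Real.exp_le_exp.2 ((le_abs_self _).trans h1)
    have := Real.exp_pos (s * (Y ω - M))
    nlinarith [abs_nonneg (s * (Y ω - M))]
  set A : ℝ → ℝ := fun s => ∫ ω, g s ω ∂P with hAdef
  set B : ℝ → ℝ := fun s => ∫ ω, xg s ω ∂P with hBdef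
  have hApos : ∀ s, 0 < A s := by
    intro s
    exact integral_exp_pos (hg_int s)
  -- measurable set
  have hSet : MeasurableSet {ω | Y ω = M} := hY (measurableSet_singleton M)
  -- Step 1: A → π
  have hA : Tendsto A atTop (nhds pR) := by
    have hπint : pR = ∫ ω, ({ω | Y ω = M}).indicator (1 : Ω → ℝ) ω ∂P := by
      rw [integral_indicator_one hSet]
      rfl
    rw [hπint]
    refine tendsto_integral_filter_of_dominated_convergence (fun _ => (1 : ℝ))
      (Filter.Eventually.of_forall fun s => (hgm s).aestronglyMeasurable) ?_
      (integrable_const 1) ?_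
    · filter_upwards [eventually_ge_atTop (0 : ℝ)] with s hs
      filter_upwards [hYae] with ω hω
      rw [Real.norm_eq_abs, abs_of_pos (Real.exp_pos _)]
      exact Real.exp_le_one_iff.2 (mul_nonpos_of_nonneg_of_nonpos hs (by linarith))
    · filter_upwards [hYae] with ω hω
      by_cases hωM : Y ω = M
      · have hval : Set.indicator {ω | Y ω = M} (1 : Ω → ℝ) ω = 1 := by
          simp [Set.indicator_apply, hωM]
        rw [hval]
        have hg1 : ∀ s : ℝ, g s ω = 1 := by intro s; simp [hgdef, hωM]
        exact tendsto_const_nhds.congr fun s => (hg1 s).symm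
      · have hlt : Y ω - M < 0 := sub_neg.2 (lt_of_le_of_ne hω hωM)
        have hval : Set.indicator {ω | Y ω = M} (1 : Ω → ℝ) ω = 0 := by
          simp [Set.indicator_apply, hωM]
        rw [hval]
        have h1 : Tendsto (fun s : ℝ => s * (Y ω - M)) atTop atBot :=
          Tendsto.atTop_mul_const_of_neg hlt tendsto_id
        exact Real.tendsto_exp_atBot.comp h1
  -- Step 2: B → 0
  have hB : Tendsto B atTop (nhds 0) := by
    have h0 : (0 : ℝ) = ∫ _ : Ω, (0 : ℝ) ∂P := by simp
    rw [h0]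
    refine tendsto_integral_filter_of_dominated_convergence (fun _ => Real.exp (-1))
      (Filter.Eventually.of_forall fun s => (hxgm s).aestronglyMeasurable) ?_
      (integrable_const _) ?_
    · filter_upwards [eventually_ge_atTop (0 : ℝ)] with s hs
      filter_upwards [hYae] with ω hω
      set x : ℝ := s * (Y ω - M) with hx
      have hxle : x ≤ 0 := mul_nonpos_of_nonneg_of_nonpos hs (by linarith)
      rw [Real.norm_eq_abs, abs_mul, abs_of_pos (Real.exp_pos _), abs_of_nonpos hxle]
      -- -x * exp x ≤ exp (-1) for x ≤ 0
      have h1 : (-x - 1) + 1 ≤ Real.exp (-x - 1) := Real.add_one_le_exp _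
      have h2 : Real.exp (-x - 1) * Real.exp x = Real.exp (-1) := by
        rw [← Real.exp_add]; ring_nf
      nlinarith [Real.exp_pos x]
    · filter_upwards [hYae] with ω hω
      by_cases hωM : Y ω = M
      · have : ∀ s : ℝ, xg s ω = 0 := by intro s; simp [hxgdef, hωM]
        simpa [this] using tendsto_const_nhds
      · have hlt : 0 < M - Y ω := by
          have := lt_of_le_of_ne hω hωM; linarith
        have h1 : Tendsto (fun s : ℝ => s * (M - Y ω)) atTop atTop :=
          Tendsto.atTop_mul_const hlt tendsto_id
        have h2 : Tendsto (fun u : ℝ => u ^ 1 * Real.exp (-u)) atTop (nhds 0) :=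
          Real.tendsto_pow_mul_exp_neg_atTop_nhds_zero 1
        have h3 := (h2.comp h1).neg
        rw [neg_zero] at h3
        refine h3.congr fun s => ?_
        simp only [Function.comp_apply, pow_one, hxgdef]
        ring_nf
  -- Step 3: KL formula
  have hKL : ∀ s : ℝ, KLdiv (P.tilted fun ω => s * Y ω) P
      = ((B s / A s - Real.log (A s) : ℝ) : EReal) := by
    intro s
    have hexp_int : Integrable (fun ω => Real.exp (s * Y ω)) P := by
      refine key (Real.exp (|s| * C)) _ (hY.const_mul s).exp fun ω => ?_
      rw [abs_of_pos (Real.exp_pos _)]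
      refine Real.exp_le_exp.2 ((le_abs_self _).trans ?_)
      rw [abs_mul]
      exact mul_le_mul_of_nonneg_left (hC ω) (abs_nonneg s)
    have hZ : ∫ ω, Real.exp (s * Y ω) ∂P = Real.exp (s * M) * A s := by
      rw [hAdef, ← integral_const_mul]
      congr 1
      funext ω
      rw [hgdef, ← Real.exp_add]
      ring_nf
    have hrn := rnDeriv_tilted_left_self (μ := P)
      (f := fun ω => s * Y ω) (hY.const_mul s).aemeasurable
    rw [KLdiv, if_pos (tilted_absolutelyContinuous P _)]
    have hZpos : 0 < ∫ ω, Real.exp (s * Y ω) ∂P := integral_exp_pos hexp_int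
    have heq : (fun ω => (((P.tilted fun ω => s * Y ω).rnDeriv P ω).toReal
          * Real.log ((((P.tilted fun ω => s * Y ω)).rnDeriv P ω)).toReal))
        =ᵐ[P] fun ω => (xg s ω) / A s - (Real.log (A s) / A s) * g s ω := by
      filter_upwards [hrn] with ω hω
      rw [hω]
      have hd : Real.exp (s * Y ω) / ∫ ω, Real.exp (s * Y ω) ∂P = g s ω / A s := by
        rw [hZ, div_eq_div_iff (mul_pos (Real.exp_pos _) (hApos s)).ne' (hApos s).ne']
        have hge : g s ω = Real.exp (s * (Y ω - M)) := rfl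
        rw [hge, ← mul_assoc, ← Real.exp_add]
        ring_nf
      rw [ENNReal.toReal_ofReal (by positivity), hd]
      have hgpos : 0 < g s ω := Real.exp_pos _
      rw [Real.log_div hgpos.ne' (hApos s).ne']
      have hge : g s ω = Real.exp (s * (Y ω - M)) := rfl
      have hxge : xg s ω = (s * (Y ω - M)) * Real.exp (s * (Y ω - M)) := rfl
      rw [hge, hxge, Real.log_exp]
      ring
    rw [integral_congr_ae heq]
    have hint1 : Integrable (fun ω => xg s ω / A s) P := (hxg_int s).div_const _
    have hint2 : Integrable (fun ω => (Real.log (A s) / A s) * g s ω) P :=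
      (hg_int s).const_mul _
    rw [integral_sub hint1 hint2, integral_div, integral_const_mul]
    have h1 : (∫ ω, xg s ω ∂P) = B s := rfl
    have h2 : (∫ ω, g s ω ∂P) = A s := rfl
    rw [h1, h2, div_mul_cancel₀ _ (hApos s).ne']
  -- Step 4: conclude
  have hlim : Tendsto (fun s => B s / A s - Real.log (A s)) atTop
      (nhds (Real.log (1 / pR))) := by
    have h1 : Tendsto (fun s => B s / A s) atTop (nhds (0 / pR)) := hB.div hA hpRpos.ne'
    have h2 : Tendsto (fun s => Real.log (A s)) atTop (nhds (Real.log pR)) :=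
      ((Real.continuousAt_log hpRpos.ne').tendsto).comp hA
    have := h1.sub h2
    rw [zero_div, zero_sub] at this
    rw [one_div, Real.log_inv]
    exact this
  have : Tendsto (fun s : ℝ => ((B s / A s - Real.log (A s) : ℝ) : EReal)) atTop
      (nhds ((Real.log (1 / pR) : ℝ) : EReal)) := by
    exact (continuous_coe_real_ereal.tendsto _).comp hlim
  refine this.congr fun s => (hKL s).symm
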